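/- If A ∈ ℝ^{n×n} is a symmetric circulant matrix with first column a and Λ = √n·Diag(Ȟ_c·a), then Ȟ⁺·A·Ȟ⁻ = Ȟ⁻·A·Ȟ⁺ = Λ·F̌² = F̌²·Λ (identifying real matrices with their complex counterparts). -/

import Mathlib

open Matrix Real

/-- The node-centered cosine matrix `(Ȟ_c)_{j,k} = n^{−1/2}·cos(2jkπ/n)`. -/
noncomputable def Hc (n : ℕ) : Matrix (Fin n) (Fin n) ℝ :=
  fun j k => Real.cos (2 * (j.val : ℝ) * (k.val : ℝ) * Real.pi / n) / Real.sqrt n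

/-- The node-centered sine matrix `(Ȟ_s)_{j,k} = n^{−1/2}·sin(2jkπ/n)`. -/
noncomputable def Hs (n : ℕ) : Matrix (Fin n) (Fin n) ℝ :=
  fun j k => Real.sin (2 * (j.val : ℝ) * (k.val : ℝ) * Real.pi / n) / Real.sqrt n

/-- The node-centered Hartley matrix `Ȟ⁺ = Ȟ_c + Ȟ_s`. -/
noncomputable def Hp (n : ℕ) : Matrix (Fin n) (Fin n) ℝ := Hc n + Hs n

/-- The node-centered Hartley matrix `Ȟ⁻ = Ȟ_c − Ȟ_s`. -/
noncomputable def Hm (n : ℕ) : Matrix (Fin n) (Fin n) ℝ := Hc n - Hs n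

/-- The node-centered Fourier matrix `F̌ = Ȟ_c + i·Ȟ_s ∈ ℂ^{n×n}`. -/
noncomputable def fourierM (n : ℕ) : Matrix (Fin n) (Fin n) ℂ :=
  (Hc n).map Complex.ofReal + Complex.I • (Hs n).map Complex.ofReal

section Aux
open Complex Finset

/-- `ec n t = exp(2πi t/n)`. -/
noncomputable def ec (n : ℕ) (t : ℤ) : ℂ := Complex.exp (2 * Real.pi * Complex.I * t / n)

lemma ec_add (n : ℕ) (s t : ℤ) : ec n (s + t) = ec n s * ec n t := by
  rw [ec, ec, ec, ← Complex.exp_add]; congr 1; push_cast; ring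

lemma ec_natmul (n : ℕ) (m : ℕ) (t : ℤ) : ec n (m * t) = ec n t ^ m := by
  rw [ec, ec, ← Complex.exp_nat_mul]; congr 1; push_cast; ring

lemma ec_dvd_eq_one (n : ℕ) [NeZero n] {t : ℤ} (h : (n:ℤ) ∣ t) : ec n t = 1 := by
  obtain ⟨k, rfl⟩ := h
  rw [ec]
  have hn : (n:ℂ) ≠ 0 := Nat.cast_ne_zero.2 (NeZero.ne n)
  have h2 : 2 * (Real.pi:ℂ) * I * (((n:ℤ) * k : ℤ):ℂ) / n = (k:ℤ) * (2 * Real.pi * I) := by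
    push_cast; field_simp
  rw [h2, Complex.exp_int_mul, Complex.exp_two_pi_mul_I, _root_.one_zpow]

lemma ec_congr (n : ℕ) [NeZero n] {s t : ℤ} (h : (n:ℤ) ∣ s - t) : ec n s = ec n t := by
  have hs : s = t + (s - t) := by ring
  rw [hs, ec_add, ec_dvd_eq_one n h, mul_one]

lemma ec_eq_one_iff (n : ℕ) [NeZero n] {t : ℤ} : ec n t = 1 ↔ (n:ℤ) ∣ t := by
  constructor
  · intro h
    rw [ec, Complex.exp_eq_one_iff] at h
    obtain ⟨k, hk⟩ := h
    have hn : (n:ℂ) ≠ 0 := Nat.cast_ne_zero.2 (NeZero.ne n)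
    have hpi : (2 * (Real.pi:ℂ) * I) ≠ 0 := by
      simp [Real.pi_ne_zero, Complex.I_ne_zero, Complex.ofReal_ne_zero]
    refine ⟨k, ?_⟩
    have h3 : (t:ℂ) = ((n:ℤ):ℂ) * (k:ℂ) := by
      field_simp at hk
      apply mul_left_cancel₀ hpi
      rw [hk]; push_cast; ring
    exact_mod_cast h3
  · exact ec_dvd_eq_one n

lemma sum_ec (n : ℕ) [NeZero n] (t : ℤ) :
    ∑ m : Fin n, ec n (m.val * t) = if (n:ℤ) ∣ t then (n:ℂ) else 0 := by
  by_cases h : (n:ℤ) ∣ t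
  · simp only [if_pos h]
    have h1 : ∀ m : Fin n, ec n (m.val * t) = 1 := fun m => ec_dvd_eq_one n (h.mul_left _)
    simp [h1]
  · rw [if_neg h]
    have hx : ec n t ≠ 1 := fun he => h ((ec_eq_one_iff n).1 he)
    rw [Fin.sum_univ_eq_sum_range (fun m => ec n (m * t))]
    have h2 : ∀ m ∈ Finset.range n, ec n (m * t) = ec n t ^ m := by
      intro m _
      have := ec_natmul n m t
      simpa using this
    rw [Finset.sum_congr rfl h2, geom_sum_eq hx]
    have hn : ec n t ^ n = 1 := by
      rw [← ec_natmul]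
      exact ec_dvd_eq_one n ⟨t, by norm_cast⟩
    rw [hn, sub_self, zero_div]

lemma mod_dvd_sub (n : ℕ) (x : ℕ) : (n:ℤ) ∣ ((x % n : ℕ) : ℤ) - x := by
  refine ⟨-(x / n : ℕ), ?_⟩
  have h := Nat.mod_add_div x n
  have h' : ((x % n : ℕ) : ℤ) + (n:ℤ) * ((x / n : ℕ):ℤ) = (x:ℤ) := by exact_mod_cast h
  linarith [h']

lemma fin_sub_val (n : ℕ) (j m : Fin n) :
    (n:ℤ) ∣ (((j - m).val : ℤ) - ((j.val : ℤ) - (m.val : ℤ))) := by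
  have hd : (j - m).val = (n - m.val + j.val) % n := by rw [Fin.sub_def]
  rw [hd]
  have h1 := mod_dvd_sub n (n - m.val + j.val)
  have hle : m.val ≤ n := le_of_lt m.isLt
  have hc : ((n - m.val + j.val : ℕ) : ℤ) = (n:ℤ) - m.val + j.val := by
    push_cast [hle]; ring
  have h2 : (n:ℤ) ∣ ((n:ℤ) - m.val + j.val) - ((j.val:ℤ) - m.val) := ⟨1, by ring⟩
  have := dvd_add h1 h2
  rw [hc] at this
  convert this using 1
  · exact rfl
  ring

lemma fin_add_val (n : ℕ) (j m : Fin n) :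
    (n:ℤ) ∣ (((j + m).val : ℤ) - ((j.val : ℤ) + (m.val : ℤ))) := by
  have hd : (j + m).val = (j.val + m.val) % n := by rw [Fin.add_def]
  rw [hd]
  have h1 := mod_dvd_sub n (j.val + m.val)
  simpa using h1

lemma fin_neg_val (n : ℕ) [NeZero n] (j : Fin n) :
    (n:ℤ) ∣ (((-j : Fin n).val : ℤ) - (-(j.val : ℤ))) := by
  have h0 : -j = 0 - j := by rw [zero_sub]
  rw [h0]
  have := fin_sub_val n 0 j
  simpa using this

/-- entry formula for the Fourier matrix -/
lemma fourierM_apply (n : ℕ) (j k : Fin n) :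
    fourierM n j k = ec n (j.val * k.val) / Real.sqrt n := by
  have harg : 2 * (Real.pi:ℂ) * I * ((j.val * k.val : ℤ):ℂ) / n
      = ((2 * (j.val:ℝ) * (k.val:ℝ) * Real.pi / n : ℝ):ℂ) * I := by
    push_cast; ring
  rw [ec, harg, Complex.exp_mul_I, ← Complex.ofReal_cos, ← Complex.ofReal_sin]
  simp only [fourierM, Matrix.add_apply, Matrix.smul_apply, Matrix.map_apply, Hc, Hs,
    smul_eq_mul]
  push_cast
  ring

/-- the conjugate Fourier matrix -/
noncomputable def Gm (n : ℕ) : Matrix (Fin n) (Fin n) ℂ :=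
  (Hc n).map Complex.ofReal - Complex.I • (Hs n).map Complex.ofReal

lemma Gm_apply (n : ℕ) (j k : Fin n) :
    Gm n j k = ec n (-(j.val * k.val)) / Real.sqrt n := by
  have harg : 2 * (Real.pi:ℂ) * I * ((-(j.val * k.val) : ℤ):ℂ) / n
      = (-((2 * (j.val:ℝ) * (k.val:ℝ) * Real.pi / n : ℝ)):ℂ) * I := by
    push_cast; ring
  rw [ec, harg]
  rw [show (-((2 * (j.val:ℝ) * (k.val:ℝ) * Real.pi / n : ℝ)):ℂ) * I
      = -(((2 * (j.val:ℝ) * (k.val:ℝ) * Real.pi / n : ℝ):ℂ) * I) by ring]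
  rw [show Complex.exp (-(((2 * (j.val:ℝ) * (k.val:ℝ) * Real.pi / n : ℝ):ℂ) * I))
      = Complex.exp ((-((2 * (j.val:ℝ) * (k.val:ℝ) * Real.pi / n : ℝ):ℂ)) * I) by ring_nf]
  rw [Complex.exp_mul_I, Complex.cos_neg, Complex.sin_neg, ← Complex.ofReal_cos,
    ← Complex.ofReal_sin]
  simp only [Gm, Matrix.sub_apply, Matrix.smul_apply, Matrix.map_apply, Hc, Hs, smul_eq_mul]
  push_cast
  ring

lemma ec_add_neg (n : ℕ) (t : ℤ) :
    ec n t + ec n (-t) = 2 * Complex.cos (2 * Real.pi * t / n) := by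
  have h1 : (2 * (Real.pi:ℂ) * I * t / n) = (2 * Real.pi * t / n) * I := by ring
  have h2 : (2 * (Real.pi:ℂ) * I * ((-t : ℤ):ℂ) / n) = -((2 * Real.pi * t / n) * I) := by
    push_cast; ring
  rw [ec, ec, h1, h2, Complex.cos]
  ring

/-- the eigenvalues -/
noncomputable def lamv (n : ℕ) (a : Fin n → ℝ) : Fin n → ℝ :=
  fun j => Real.sqrt n * Matrix.mulVec (Hc n) a j

variable {n : ℕ} [NeZero n] {a : Fin n → ℝ}

lemma sum_plus_eq_sum_minus (ha : ∀ i : Fin n, a (-i) = a i) (j : Fin n) :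
    ∑ r : Fin n, (a r : ℂ) * ec n (r.val * j.val)
      = ∑ r : Fin n, (a r : ℂ) * ec n (-(r.val * j.val)) := by
  refine Fintype.sum_equiv (Equiv.neg (Fin n)) _ _ fun r => ?_
  simp only [Equiv.neg_apply]
  rw [ha]
  congr 1
  refine ec_congr n ?_
  have h := (fin_neg_val n r).mul_right (j.val : ℤ)
  convert h using 1
  · exact rfl
  push_cast
  ring

lemma lam_plus (ha : ∀ i : Fin n, a (-i) = a i) (j : Fin n) :
    ∑ r : Fin n, (a r : ℂ) * ec n (r.val * j.val) = ((lamv n a j : ℝ) : ℂ) := by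
  have hsq : (Real.sqrt n) * (Real.sqrt n) = n := Real.mul_self_sqrt (Nat.cast_nonneg n)
  have hs0 : Real.sqrt n ≠ 0 := by
    have : (0:ℝ) < n := by exact_mod_cast Nat.pos_of_ne_zero (NeZero.ne n)
    positivity
  have hreal : lamv n a j
      = ∑ r : Fin n, a r * Real.cos (2 * (j.val:ℝ) * (r.val:ℝ) * Real.pi / n) := by
    rw [lamv, Matrix.mulVec]
    simp only [dotProduct, Hc]
    rw [Finset.mul_sum]
    refine Finset.sum_congr rfl fun r _ => ?_
    field_simp
  have hlam : ((lamv n a j : ℝ) : ℂ)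
      = ∑ r : Fin n, (a r : ℂ) * Complex.cos (2 * Real.pi * ((r.val * j.val : ℤ):ℂ) / n) := by
    rw [hreal]
    push_cast
    refine Finset.sum_congr rfl fun r _ => ?_
    congr 1
    push_cast
    ring
  have hdouble : (2:ℂ) * ∑ r : Fin n, (a r : ℂ) * ec n (r.val * j.val)
      = 2 * ((lamv n a j : ℝ) : ℂ) := by
    have h1 := sum_plus_eq_sum_minus ha j
    calc (2:ℂ) * ∑ r : Fin n, (a r : ℂ) * ec n (r.val * j.val)
        = (∑ r : Fin n, (a r : ℂ) * ec n (r.val * j.val))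
          + ∑ r : Fin n, (a r : ℂ) * ec n (-(r.val * j.val)) := by rw [← h1]; ring
      _ = ∑ r : Fin n, (a r : ℂ) * (ec n (r.val * j.val) + ec n (-(r.val * j.val))) := by
          rw [← Finset.sum_add_distrib]; exact Finset.sum_congr rfl fun r _ => by ring
      _ = ∑ r : Fin n, (a r : ℂ) * (2 * Complex.cos (2 * Real.pi * ((r.val * j.val : ℤ):ℂ) / n)) := by
          refine Finset.sum_congr rfl fun r _ => ?_
          rw [ec_add_neg]
      _ = 2 * ((lamv n a j : ℝ) : ℂ) := by
          rw [hlam, Finset.mul_sum]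
          exact Finset.sum_congr rfl fun r _ => by ring
  have := mul_left_cancel₀ (two_ne_zero' ℂ) hdouble
  exact this

lemma lam_minus (ha : ∀ i : Fin n, a (-i) = a i) (j : Fin n) :
    ∑ r : Fin n, (a r : ℂ) * ec n (-(r.val * j.val)) = ((lamv n a j : ℝ) : ℂ) := by
  rw [← sum_plus_eq_sum_minus ha j, lam_plus ha j]

lemma lam_neg (ha : ∀ i : Fin n, a (-i) = a i) (j : Fin n) :
    lamv n a (-j) = lamv n a j := by
  have h1 := lam_plus ha (-j)
  have h2 : ∑ r : Fin n, (a r : ℂ) * ec n (r.val * (-j : Fin n).val)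
      = ∑ r : Fin n, (a r : ℂ) * ec n (-(r.val * j.val)) := by
    refine Finset.sum_congr rfl fun r _ => ?_
    congr 1
    refine ec_congr n ?_
    have h := (fin_neg_val n j).mul_left (r.val : ℤ)
    convert h using 1
    · exact rfl
    push_cast
    ring
  rw [h2, lam_minus ha j] at h1
  exact_mod_cast h1.symm

/-- diagonal eigenvalue matrix over ℂ -/
noncomputable def Lc (n : ℕ) (a : Fin n → ℝ) : Matrix (Fin n) (Fin n) ℂ :=
  Matrix.diagonal (fun j => ((lamv n a j : ℝ) : ℂ))

/-- the flip permutation matrix -/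
noncomputable def Jm (n : ℕ) [NeZero n] : Matrix (Fin n) (Fin n) ℂ :=
  Matrix.of fun j k => if j + k = 0 then (1:ℂ) else 0

lemma sqrt_ne_zero' (hn : n ≠ 0) : Real.sqrt n ≠ 0 := by
  have : (0:ℝ) < n := by exact_mod_cast Nat.pos_of_ne_zero hn
  positivity

lemma AF_eq (ha : ∀ i : Fin n, a (-i) = a i) (A : Matrix (Fin n) (Fin n) ℝ)
    (hA : ∀ j k : Fin n, A j k = a (j - k)) :
    A.map Complex.ofReal * fourierM n = fourierM n * Lc n a := by
  ext j k
  rw [Matrix.mul_apply, Lc, Matrix.mul_diagonal, fourierM_apply]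
  have step1 : ∀ m : Fin n, A.map Complex.ofReal j m * fourierM n m k
      = (a (j - m) : ℂ) * ec n (m.val * k.val) / Real.sqrt n := by
    intro m
    rw [Matrix.map_apply, fourierM_apply, hA]
    ring
  simp only [step1]
  have hre : ∑ r : Fin n,
        (a r : ℂ) * (ec n (j.val * k.val) * ec n (-(r.val * k.val))) / Real.sqrt n
      = ∑ m : Fin n, (a (j - m) : ℂ) * ec n (m.val * k.val) / Real.sqrt n := by
    refine Fintype.sum_equiv (Equiv.subLeft j) _ _ fun r => ?_
    simp only [Equiv.subLeft_apply, sub_sub_cancel]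
    congr 1
    rw [← ec_add]
    congr 1
    refine (ec_congr n ?_).symm
    have h := (fin_sub_val n j r).mul_right (k.val : ℤ)
    convert h using 1
    · exact rfl
    push_cast
    ring
  rw [← hre, ← lam_minus ha k, Finset.mul_sum]
  refine Finset.sum_congr rfl fun r _ => ?_
  ring

lemma AG_eq (ha : ∀ i : Fin n, a (-i) = a i) (A : Matrix (Fin n) (Fin n) ℝ)
    (hA : ∀ j k : Fin n, A j k = a (j - k)) :
    A.map Complex.ofReal * Gm n = Gm n * Lc n a := by
  ext j k
  rw [Matrix.mul_apply, Lc, Matrix.mul_diagonal, Gm_apply]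
  have step1 : ∀ m : Fin n, A.map Complex.ofReal j m * Gm n m k
      = (a (j - m) : ℂ) * ec n (-(m.val * k.val)) / Real.sqrt n := by
    intro m
    rw [Matrix.map_apply, Gm_apply, hA]
    ring
  simp only [step1]
  have hre : ∑ r : Fin n,
        (a r : ℂ) * (ec n (-(j.val * k.val)) * ec n (r.val * k.val)) / Real.sqrt n
      = ∑ m : Fin n, (a (j - m) : ℂ) * ec n (-(m.val * k.val)) / Real.sqrt n := by
    refine Fintype.sum_equiv (Equiv.subLeft j) _ _ fun r => ?_
    simp only [Equiv.subLeft_apply, sub_sub_cancel]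
    congr 1
    rw [← ec_add]
    congr 1
    refine (ec_congr n ?_).symm
    have h := (fin_sub_val n j r).mul_right (k.val : ℤ)
    rw [← Int.dvd_neg] at h
    convert h using 1
    push_cast
    ring
  rw [← hre, ← lam_plus ha k, Finset.mul_sum]
  refine Finset.sum_congr rfl fun r _ => ?_
  ring

lemma dvd_iff_eq (j k : Fin n) : (n:ℤ) ∣ ((j.val:ℤ) - k.val) ↔ j = k := by
  constructor
  · intro h
    have habs : |((j.val:ℤ) - k.val)| < n := by
      have h1 : (j.val:ℤ) < n := by exact_mod_cast j.isLt
      have h2 : (k.val:ℤ) < n := by exact_mod_cast k.isLt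
      have h3 : (0:ℤ) ≤ j.val := Int.ofNat_nonneg _
      have h4 : (0:ℤ) ≤ k.val := Int.ofNat_nonneg _
      rw [abs_lt]; omega
    have := Int.eq_zero_of_abs_lt_dvd h habs
    have : (j.val:ℤ) = k.val := by omega
    exact Fin.ext (by exact_mod_cast this)
  · rintro rfl; simp

lemma dvd_iff_add_eq_zero (j k : Fin n) : (n:ℤ) ∣ ((j.val:ℤ) + k.val) ↔ j + k = 0 := by
  have hv := fin_add_val n j k
  constructor
  · intro h
    have h2 : (n:ℤ) ∣ (((j+k).val : ℤ)) := by
      have := dvd_add hv h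
      simpa using this
    have habs : |(((j+k).val : ℤ))| < n := by
      have h1 : ((j+k).val:ℤ) < n := by exact_mod_cast (j+k).isLt
      have h3 : (0:ℤ) ≤ ((j+k).val:ℤ) := Int.ofNat_nonneg _
      rw [abs_lt]; omega
    have h0 := Int.eq_zero_of_abs_lt_dvd h2 habs
    exact Fin.ext (by rw [Fin.val_zero]; exact_mod_cast h0)
  · intro h
    have h0 : ((j+k).val : ℤ) = 0 := by rw [h]; simp
    have h3 := hv
    rw [h0, zero_sub, Int.dvd_neg] at h3
    exact h3

lemma FG_eq_one : fourierM n * Gm n = 1 := by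
  ext j k
  rw [Matrix.mul_apply, Matrix.one_apply]
  have hsq : (Real.sqrt n : ℝ) * Real.sqrt n = n := Real.mul_self_sqrt (Nat.cast_nonneg n)
  have hn0 : (n:ℂ) ≠ 0 := Nat.cast_ne_zero.2 (NeZero.ne n)
  have step1 : ∀ m : Fin n, fourierM n j m * Gm n m k
      = ec n (m.val * ((j.val:ℤ) - k.val)) / n := by
    intro m
    rw [fourierM_apply, Gm_apply]
    have : ec n ((j.val:ℤ) * m.val) * ec n (-((m.val:ℤ) * k.val))
        = ec n (m.val * ((j.val:ℤ) - k.val)) := by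
      rw [← ec_add]; congr 1; ring
    rw [div_mul_div_comm, this]
    have hsqc : ((Real.sqrt n : ℝ):ℂ) * ((Real.sqrt n : ℝ):ℂ) = (n:ℂ) := by
      exact_mod_cast congrArg Complex.ofReal hsq
    rw [hsqc]
  simp only [step1]
  rw [← Finset.sum_div, sum_ec n ((j.val:ℤ) - k.val)]
  by_cases h : j = k
  · rw [if_pos ((dvd_iff_eq j k).2 h), if_pos h, div_self hn0]
  · rw [if_neg (fun hd => h ((dvd_iff_eq j k).1 hd)), if_neg h, zero_div]

lemma GF_eq_one : Gm n * fourierM n = 1 := by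
  ext j k
  rw [Matrix.mul_apply, Matrix.one_apply]
  have hsq : (Real.sqrt n : ℝ) * Real.sqrt n = n := Real.mul_self_sqrt (Nat.cast_nonneg n)
  have hn0 : (n:ℂ) ≠ 0 := Nat.cast_ne_zero.2 (NeZero.ne n)
  have step1 : ∀ m : Fin n, Gm n j m * fourierM n m k
      = ec n (m.val * ((k.val:ℤ) - j.val)) / n := by
    intro m
    rw [fourierM_apply, Gm_apply]
    have : ec n (-((j.val:ℤ) * m.val)) * ec n ((m.val:ℤ) * k.val)
        = ec n (m.val * ((k.val:ℤ) - j.val)) := by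
      rw [← ec_add]; congr 1; ring
    rw [div_mul_div_comm, this]
    have hsqc : ((Real.sqrt n : ℝ):ℂ) * ((Real.sqrt n : ℝ):ℂ) = (n:ℂ) := by
      exact_mod_cast congrArg Complex.ofReal hsq
    rw [hsqc]
  simp only [step1]
  rw [← Finset.sum_div, sum_ec n ((k.val:ℤ) - j.val)]
  by_cases h : j = k
  · rw [if_pos ((dvd_iff_eq k j).2 h.symm), if_pos h, div_self hn0]
  · rw [if_neg (fun hd => h ((dvd_iff_eq k j).1 hd).symm), if_neg h, zero_div]

lemma FF_eq_Jm : fourierM n * fourierM n = Jm n := by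
  ext j k
  rw [Matrix.mul_apply, Jm, Matrix.of_apply]
  have hsq : (Real.sqrt n : ℝ) * Real.sqrt n = n := Real.mul_self_sqrt (Nat.cast_nonneg n)
  have hn0 : (n:ℂ) ≠ 0 := Nat.cast_ne_zero.2 (NeZero.ne n)
  have step1 : ∀ m : Fin n, fourierM n j m * fourierM n m k
      = ec n (m.val * ((j.val:ℤ) + k.val)) / n := by
    intro m
    rw [fourierM_apply, fourierM_apply]
    have : ec n ((j.val:ℤ) * m.val) * ec n ((m.val:ℤ) * k.val)
        = ec n (m.val * ((j.val:ℤ) + k.val)) := by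
      rw [← ec_add]; congr 1; ring
    rw [div_mul_div_comm, this]
    have hsqc : ((Real.sqrt n : ℝ):ℂ) * ((Real.sqrt n : ℝ):ℂ) = (n:ℂ) := by
      exact_mod_cast congrArg Complex.ofReal hsq
    rw [hsqc]
  simp only [step1]
  rw [← Finset.sum_div, sum_ec n ((j.val:ℤ) + k.val)]
  by_cases h : j + k = 0
  · rw [if_pos ((dvd_iff_add_eq_zero j k).2 h), if_pos h, div_self hn0]
  · rw [if_neg (fun hd => h ((dvd_iff_add_eq_zero j k).1 hd)), if_neg h, zero_div]

lemma GG_eq_Jm : Gm n * Gm n = Jm n := by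
  ext j k
  rw [Matrix.mul_apply, Jm, Matrix.of_apply]
  have hsq : (Real.sqrt n : ℝ) * Real.sqrt n = n := Real.mul_self_sqrt (Nat.cast_nonneg n)
  have hn0 : (n:ℂ) ≠ 0 := Nat.cast_ne_zero.2 (NeZero.ne n)
  have step1 : ∀ m : Fin n, Gm n j m * Gm n m k
      = ec n (m.val * (-((j.val:ℤ) + k.val))) / n := by
    intro m
    rw [Gm_apply, Gm_apply]
    have : ec n (-((j.val:ℤ) * m.val)) * ec n (-((m.val:ℤ) * k.val))
        = ec n (m.val * (-((j.val:ℤ) + k.val))) := by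
      rw [← ec_add]; congr 1; ring
    rw [div_mul_div_comm, this]
    have hsqc : ((Real.sqrt n : ℝ):ℂ) * ((Real.sqrt n : ℝ):ℂ) = (n:ℂ) := by
      exact_mod_cast congrArg Complex.ofReal hsq
    rw [hsqc]
  simp only [step1]
  rw [← Finset.sum_div, sum_ec n (-((j.val:ℤ) + k.val))]
  simp only [Int.dvd_neg]
  by_cases h : j + k = 0
  · rw [if_pos ((dvd_iff_add_eq_zero j k).2 h), if_pos h, div_self hn0]
  · rw [if_neg (fun hd => h ((dvd_iff_add_eq_zero j k).1 hd)), if_neg h, zero_div]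

lemma Lc_comm_Jm (ha : ∀ i : Fin n, a (-i) = a i) : Lc n a * Jm n = Jm n * Lc n a := by
  ext j k
  rw [Lc, Matrix.diagonal_mul, Matrix.mul_diagonal, Jm, Matrix.of_apply]
  by_cases h : j + k = 0
  · rw [if_pos h]
    have hj : j = -k := eq_neg_of_add_eq_zero_left h
    rw [hj, lam_neg ha k]
    ring
  · rw [if_neg h]
    ring

lemma Hp_decomp : (Hp n).map Complex.ofReal
    = (2:ℂ)⁻¹ • ((1 - Complex.I) • fourierM n + (1 + Complex.I) • Gm n) := by
  ext j k
  simp only [Matrix.map_apply, Matrix.smul_apply, Matrix.add_apply, Hp, fourierM, Gm,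
    Matrix.sub_apply, smul_eq_mul, Complex.ofReal_add]
  set c := ((Hc n j k : ℝ) : ℂ)
  set s := ((Hs n j k : ℝ) : ℂ)
  have : c + s = 2⁻¹ * ((1 - Complex.I) * (c + Complex.I * s)
      + (1 + Complex.I) * (c - Complex.I * s)) := by
    have hI := Complex.I_sq
    linear_combination (s) * hI
  exact this

lemma Hm_decomp : (Hm n).map Complex.ofReal
    = (2:ℂ)⁻¹ • ((1 + Complex.I) • fourierM n + (1 - Complex.I) • Gm n) := by
  ext j k
  simp only [Matrix.map_apply, Matrix.smul_apply, Matrix.add_apply, Hm, fourierM, Gm,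
    Matrix.sub_apply, smul_eq_mul, Complex.ofReal_sub]
  set c := ((Hc n j k : ℝ) : ℂ)
  set s := ((Hs n j k : ℝ) : ℂ)
  have : c - s = 2⁻¹ * ((1 + Complex.I) * (c + Complex.I * s)
      + (1 - Complex.I) * (c - Complex.I * s)) := by
    have hI := Complex.I_sq
    linear_combination (-s) * hI
  exact this

lemma Lam_map_eq (hn : n ≠ 0) :
    (Real.sqrt n • Matrix.diagonal ((Hc n).mulVec a)).map Complex.ofReal = Lc n a := by
  ext j k
  simp only [Matrix.map_apply, Matrix.smul_apply, Lc, Matrix.diagonal, Matrix.of_apply,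
    smul_eq_mul, lamv]
  by_cases h : j = k
  · subst h; simp [lamv]
  · simp [h]

lemma key_product (ha : ∀ i : Fin n, a (-i) = a i) (A : Matrix (Fin n) (Fin n) ℝ)
    (hA : ∀ j k : Fin n, A j k = a (j - k))
    (X Y : Matrix (Fin n) (Fin n) ℂ) (c₁ c₂ c₃ c₄ : ℂ)
    (hX : X = (2:ℂ)⁻¹ • (c₁ • fourierM n + c₂ • Gm n))
    (hY : Y = (2:ℂ)⁻¹ • (c₂ • fourierM n + c₁ • Gm n))
    (hcc : c₁ * c₂ = 2) (hsq : c₁ * c₁ + c₂ * c₂ = 0) :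
    X * A.map Complex.ofReal * Y = Jm n * Lc n a := by
  subst hX hY
  rw [mul_assoc]
  have h1 : A.map Complex.ofReal * ((2:ℂ)⁻¹ • (c₂ • fourierM n + c₁ • Gm n))
      = (2:ℂ)⁻¹ • (c₂ • (fourierM n * Lc n a) + c₁ • (Gm n * Lc n a)) := by
    rw [Matrix.mul_smul, Matrix.mul_add, Matrix.mul_smul, Matrix.mul_smul,
      AF_eq ha A hA, AG_eq ha A hA]
  rw [h1]
  simp only [Matrix.smul_mul, Matrix.mul_smul, Matrix.add_mul, Matrix.mul_add, smul_add,
    smul_smul, ← mul_assoc]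
  rw [FF_eq_Jm, FG_eq_one, GF_eq_one, GG_eq_Jm, one_mul]
  match_scalars
  · field_simp
    linear_combination 2 * hcc
  · field_simp
    linear_combination hsq

end Aux

/-- For a symmetric circulant `A` with first column `a` and
`Λ = √n·Diag(Ȟ_c·a)`: `Ȟ⁺·A·Ȟ⁻ = Ȟ⁻·A·Ȟ⁺ = Λ·F̌² = F̌²·Λ` (identifying
real matrices with their complex counterparts). -/
theorem symm_circulant_mixed_node_hartley (n : ℕ) [NeZero n] (a : Fin n → ℝ)
    (A : Matrix (Fin n) (Fin n) ℝ)
    (hA : ∀ j k : Fin n, A j k = a (j - k))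
    (ha : ∀ i : Fin n, a (-i) = a i) :
    (Hp n * A * Hm n).map Complex.ofReal =
      (Real.sqrt n • Matrix.diagonal ((Hc n).mulVec a)).map Complex.ofReal *
        fourierM n ^ 2 ∧
    (Hm n * A * Hp n).map Complex.ofReal =
      (Real.sqrt n • Matrix.diagonal ((Hc n).mulVec a)).map Complex.ofReal *
        fourierM n ^ 2 ∧
    (Real.sqrt n • Matrix.diagonal ((Hc n).mulVec a)).map Complex.ofReal *
        fourierM n ^ 2 =
      fourierM n ^ 2 *
        (Real.sqrt n • Matrix.diagonal ((Hc n).mulVec a)).map Complex.ofReal := by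
  have hmap : ∀ (X Y : Matrix (Fin n) (Fin n) ℝ),
      (X * Y).map Complex.ofReal = X.map Complex.ofReal * Y.map Complex.ofReal :=
    fun X Y => Matrix.map_mul (f := Complex.ofRealHom)
  have hpow : fourierM n ^ 2 = fourierM n * fourierM n := sq (fourierM n) ▸ rfl
  have hLam := Lam_map_eq (a := a) (NeZero.ne n)
  have hRHS : (Real.sqrt n • Matrix.diagonal ((Hc n).mulVec a)).map Complex.ofReal *
      fourierM n ^ 2 = Jm n * Lc n a := by
    rw [hLam, hpow, FF_eq_Jm, ← Lc_comm_Jm ha]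
  have hcc₁ : (1 - Complex.I) * (1 + Complex.I) = 2 := by
    linear_combination -Complex.I_sq
  have hsq₁ : (1 - Complex.I) * (1 - Complex.I) + (1 + Complex.I) * (1 + Complex.I) = 0 := by
    linear_combination 2 * Complex.I_sq
  have hcc₂ : (1 + Complex.I) * (1 - Complex.I) = 2 := by
    linear_combination -Complex.I_sq
  have hsq₂ : (1 + Complex.I) * (1 + Complex.I) + (1 - Complex.I) * (1 - Complex.I) = 0 := by
    linear_combination 2 * Complex.I_sq
  refine ⟨?_, ?_, ?_⟩
  · rw [hmap, hmap, hRHS]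
    exact key_product ha A hA _ _ (1 - Complex.I) (1 + Complex.I) 0 0
      (Hp_decomp) (Hm_decomp) hcc₁ hsq₁
  · rw [hmap, hmap, hRHS]
    exact key_product ha A hA _ _ (1 + Complex.I) (1 - Complex.I) 0 0
      (Hm_decomp) (Hp_decomp) hcc₂ hsq₂
  · rw [hLam, hpow, FF_eq_Jm]
    exact Lc_comm_Jm ha
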